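/- Let c₀, c₁, …, cₙ be distinct Gaussian integers such that {c₀, …, cₙ} is an n-universal set, and let b₀, b₁, …, bₙ be any distinct Gaussian integers. Then the absolute value of the volume ∏_{0 ≤ i < j ≤ n} (c_i − c_j) is less than or equal to the absolute value of the volume ∏_{0 ≤ i < j ≤ n} (b_i − b_j). -/

import Mathlib

open Polynomial

/-- The fraction field of the Gaussian integers. -/
abbrev FF : Type := FractionRing GaussianInt

/-- The canonical embedding of `ℤ[i]` into its fraction field. -/
noncomputable def ι : GaussianInt →+* FF := algebraMap GaussianInt FF

/-- A polynomial with coefficients in the fraction field of `ℤ[i]` is integer-valued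
if it takes values in (the image of) `ℤ[i]` at every Gaussian integer. -/
def IntegerValued (f : FF[X]) : Prop :=
  ∀ z : GaussianInt, f.eval (ι z) ∈ Set.range ι

/-- A set `M ⊆ ℤ[i]` is `n`-universal if every polynomial of degree at most `n`
with coefficients in the fraction field of `ℤ[i]` taking integer values on `M`
is integer-valued. -/
def IsNUniversal (n : ℕ) (M : Set GaussianInt) : Prop :=
  ∀ f : FF[X], f.natDegree ≤ n → (∀ c ∈ M, f.eval (ι c) ∈ Set.range ι) → IntegerValued f

/-- The volume of a family of Gaussian integers: the product of all pairwise
differences `x i - x j` over pairs `i < j`. -/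
def volume {n : ℕ} (x : Fin (n + 1) → GaussianInt) : GaussianInt :=
  ∏ ij ∈ Finset.univ.filter (fun ij : Fin (n + 1) × Fin (n + 1) => ij.1 < ij.2),
    (x ij.1 - x ij.2)

lemma iota_injective : Function.Injective ι :=
  IsFractionRing.injective GaussianInt FF

lemma volume_eq_prod {m : ℕ} (x : Fin (m + 1) → GaussianInt) :
    volume x = ∏ i : Fin (m + 1), ∏ j ∈ Finset.Ioi i, (x i - x j) := by
  rw [volume, Finset.prod_filter, ← Finset.univ_product_univ, Finset.prod_product]
  refine Finset.prod_congr rfl fun i _ => ?_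
  rw [← Finset.prod_filter]
  congr 1
  ext j
  simp [Finset.mem_Ioi]

lemma abs_volume {m : ℕ} (x : Fin (m + 1) → GaussianInt) :
    ‖GaussianInt.toComplex (volume x)‖ =
      ‖GaussianInt.toComplex (Matrix.vandermonde x).det‖ := by
  rw [volume_eq_prod, Matrix.det_vandermonde, map_prod, map_prod, norm_prod, norm_prod]
  refine Finset.prod_congr rfl fun i _ => ?_
  rw [map_prod, map_prod, norm_prod, norm_prod]
  refine Finset.prod_congr rfl fun j _ => ?_
  rw [RingHom.map_sub, RingHom.map_sub, norm_sub_rev]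

lemma one_le_abs_of_ne_zero {z : GaussianInt} (hz : z ≠ 0) :
    1 ≤ ‖GaussianInt.toComplex z‖ := by
  have h1 : (1 : ℤ) ≤ z.norm := GaussianInt.norm_pos.mpr hz
  have h2 : (z.norm : ℝ) = Complex.normSq (GaussianInt.toComplex z) :=
    GaussianInt.intCast_real_norm z
  have h3 : (1 : ℝ) ≤ Complex.normSq (GaussianInt.toComplex z) := by
    rw [← h2]; exact_mod_cast h1
  have h4 : ‖GaussianInt.toComplex z‖ ^ 2 =
      Complex.normSq (GaussianInt.toComplex z) := Complex.sq_norm _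
  nlinarith [norm_nonneg (GaussianInt.toComplex z)]

/-- The volume of an `n`-universal set of `n + 1` distinct Gaussian integers is minimal
in absolute value among the volumes of all families of `n + 1` distinct Gaussian integers. -/
theorem universal_volume_minimal (n : ℕ) (c b : Fin (n + 1) → GaussianInt)
    (hc : Function.Injective c) (hb : Function.Injective b)
    (huniv : IsNUniversal n (Set.range c)) :
    ‖GaussianInt.toComplex (volume c)‖ ≤
      ‖GaussianInt.toComplex (volume b)‖ := by
  classical
  set v : Fin (n + 1) → FF := fun i => ι (c i) with hv
  have hvinj : Set.InjOn v ↑(Finset.univ : Finset (Fin (n + 1))) := fun i _ j _ h => hc (iota_injective h)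
  -- each Lagrange basis polynomial is integer valued
  have hL : ∀ j : Fin (n + 1), IntegerValued (Lagrange.basis Finset.univ v j) := by
    intro j
    refine huniv _ ?_ ?_
    · rw [Lagrange.natDegree_basis hvinj (Finset.mem_univ j)]
      simp
    · rintro z ⟨m, rfl⟩
      by_cases hmj : m = j
      · subst hmj
        rw [show ι (c m) = v m from rfl, Lagrange.eval_basis_self hvinj (Finset.mem_univ m)]
        exact ⟨1, map_one ι⟩
      · rw [show ι (c m) = v m from rfl,
          Lagrange.eval_basis_of_ne (Ne.symm hmj) (Finset.mem_univ m)]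
        exact ⟨0, map_zero ι⟩
  -- choose integer entries for the transition matrix
  have hchoice : ∀ i j : Fin (n + 1), ∃ d : GaussianInt,
      ι d = (Lagrange.basis Finset.univ v j).eval (ι (b i)) := fun i j => hL j (b i)
  choose d hd using hchoice
  -- matrix identity: Vandermonde(b) = D * Vandermonde(c) over FF
  have hmat : (Matrix.vandermonde b).map ι =
      (Matrix.of fun i j => ι (d i j)) * (Matrix.vandermonde c).map ι := by
    ext i k
    have hdeg : ((X : FF[X]) ^ (k : ℕ)).degree < (Finset.univ : Finset (Fin (n + 1))).card := by
      rw [Polynomial.degree_X_pow]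
      simp only [Finset.card_univ, Fintype.card_fin]
      exact_mod_cast Nat.lt_succ_of_le k.is_le
    have hinterp := Lagrange.eq_interpolate (f := (X : FF[X]) ^ (k : ℕ)) hvinj hdeg
    have hkey := congrArg (Polynomial.eval (ι (b i))) hinterp
    simp only [Lagrange.interpolate_apply, Polynomial.eval_pow, Polynomial.eval_X,
      Polynomial.eval_finset_sum, Polynomial.eval_mul, Polynomial.eval_C] at hkey
    simp only [Matrix.map_apply, Matrix.vandermonde_apply, Matrix.mul_apply, Matrix.of_apply,
      map_pow]
    rw [hkey]
    refine Finset.sum_congr rfl fun j _ => ?_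
    rw [hd i j]
    ring
  -- take determinants and pull back to ℤ[i]
  have hdet : (Matrix.vandermonde b).det =
      (Matrix.of fun i j => d i j).det * (Matrix.vandermonde c).det := by
    apply iota_injective
    rw [map_mul, RingHom.map_det, RingHom.map_det, RingHom.map_det]
    simp only [RingHom.mapMatrix_apply]
    have hE : (Matrix.of fun i j => ι (d i j)) = (Matrix.of fun i j => d i j).map ⇑ι := by
      ext i j
      simp [Matrix.map_apply]
    rw [hmat, Matrix.det_mul, hE]
  -- volume of b is nonzero
  have hVb : (Matrix.vandermonde b).det ≠ 0 := by
    rw [Matrix.det_vandermonde]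
    refine Finset.prod_ne_zero_iff.mpr fun i _ => Finset.prod_ne_zero_iff.mpr fun j hj => ?_
    have hij : i ≠ j := ne_of_lt (Finset.mem_Ioi.mp hj)
    exact sub_ne_zero.mpr fun h => hij (hb h.symm)
  have hdne : (Matrix.of fun i j => d i j).det ≠ 0 := by
    intro h
    rw [h, zero_mul] at hdet
    exact hVb hdet
  -- conclude
  rw [abs_volume, abs_volume, hdet, map_mul, norm_mul]
  have h1 := one_le_abs_of_ne_zero hdne
  have h2 : 0 ≤ ‖GaussianInt.toComplex (Matrix.vandermonde c).det‖ :=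
    norm_nonneg _
  nlinarith
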